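/- Let T be a transitive tournament with an even number n of vertices. Then det(S_T) = 1, where S_T is the skew-adjacency matrix of T. -/

import Mathlib

open scoped Classical

/-- A tournament: irreflexive, and between distinct vertices exactly one arc. -/
def IsTournament {V : Type*} (r : V → V → Prop) : Prop :=
  (∀ i, ¬ r i i) ∧ ∀ i j, i ≠ j → (r i j ↔ ¬ r j i)

/-- Skew-adjacency matrix of a relation. -/
noncomputable def skew {V : Type*} (r : V → V → Prop) : Matrix V V ℤ :=
  Matrix.of fun i j => if r i j then 1 else if r j i then -1 else 0

/-- Determinant of the skew-adjacency matrix. -/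
noncomputable def tdet {V : Type*} [Fintype V] [DecidableEq V] (r : V → V → Prop) : ℤ :=
  (skew r).det

/-- Determinant of the subtournament induced by a finite vertex subset. -/
noncomputable def subdet {V : Type*} [Fintype V] [DecidableEq V] (r : V → V → Prop)
    (s : Finset V) : ℤ :=
  ((skew r).submatrix (fun x : {x // x ∈ s} => x.1) (fun x : {x // x ∈ s} => x.1)).det

/-- Switch of `r` with respect to `W`: arcs between `W` and its complement are reversed. -/
def switchRel {V : Type*} (r : V → V → Prop) (W : Set V) : V → V → Prop :=
  fun i j => if (i ∈ W ↔ j ∈ W) then r i j else r j i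

/-- Switching equivalence of two tournaments on the same vertex set. -/
def SwitchEquiv {V : Type*} (r₁ r₂ : V → V → Prop) : Prop :=
  ∃ W : Set V, ∀ i j, r₂ i j ↔ switchRel r₁ W i j

def IsTransitive {V : Type*} (r : V → V → Prop) : Prop :=
  ∀ a b c, r a b → r b c → r a c

def IsTransitiveOn {V : Type*} (r : V → V → Prop) (X : Finset V) : Prop :=
  ∀ a ∈ X, ∀ b ∈ X, ∀ c ∈ X, r a b → r b c → r a c

/-- A 4-set inducing a diamond: a vertex dominating or dominated by a 3-cycle. -/
def IsDiamond {V : Type*} (r : V → V → Prop) (X : Finset V) : Prop :=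
  ∃ a b c d : V, X = {a, b, c, d} ∧ a ≠ b ∧ a ≠ c ∧ a ≠ d ∧ b ≠ c ∧ b ≠ d ∧ c ≠ d ∧
    r b c ∧ r c d ∧ r d b ∧ ((r a b ∧ r a c ∧ r a d) ∨ (r b a ∧ r c a ∧ r d a))

/-- Number of diamonds of a tournament. -/
noncomputable def numDiamonds {V : Type*} [Fintype V] (r : V → V → Prop) : ℕ :=
  Set.ncard {X : Finset V | IsDiamond r X}

/-- The tournament `L_n`: a transitive chain `u_0 → ⋯ → u_{n-2}` together with a last
vertex alternating along the chain, starting with `u_{n-1} → u_0`. -/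
def LRel (n : ℕ) : Fin n → Fin n → Prop := fun i j =>
  (j.val < n - 1 ∧ i.val < j.val) ∨
  (j.val = n - 1 ∧ i.val < n - 1 ∧ i.val % 2 = 1) ∨
  (i.val = n - 1 ∧ j.val < n - 1 ∧ j.val % 2 = 0)

/-- Join of two tournaments: all arcs from the first to the second. -/
def joinRel {A B : Type*} (r : A → A → Prop) (s : B → B → Prop) : A ⊕ B → A ⊕ B → Prop :=
  fun x y => match x, y with
  | .inl a, .inl a' => r a a'
  | .inr b, .inr b' => s b b'
  | .inl _, .inr _ => True
  | .inr _, .inl _ => False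

/-- `T⁺`: add one new vertex dominated by every vertex of `T`. -/
def plusRel {A : Type*} (r : A → A → Prop) : Option A → Option A → Prop :=
  fun x y => match x, y with
  | some a, some b => r a b
  | some _, none => True
  | _, _ => False

/-- Blowup of `r` by the family of tournaments `t`. -/
def blowupG {ι : Type*} [DecidableEq ι] (r : ι → ι → Prop) {κ : ι → Type*}
    (t : ∀ i, κ i → κ i → Prop) : (Σ i, κ i) → (Σ i, κ i) → Prop :=
  fun x y => if h : x.1 = y.1 then t y.1 (h ▸ x.2) y.2 else r x.1 y.1

/-- Transitive `(a_1,…,a_n)`-blowup of `r`. -/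
def blowup {ι : Type*} [DecidableEq ι] (r : ι → ι → Prop) (a : ι → ℕ) :
    (Σ i, Fin (a i)) → (Σ i, Fin (a i)) → Prop :=
  blowupG r (fun _ p q => p < q)

/-- Membership in `𝒟_k`: every subtournament has determinant at most `k²`. -/
def memD {V : Type*} [Fintype V] [DecidableEq V] (r : V → V → Prop) (k : ℕ) : Prop :=
  ∀ s : Finset V, subdet r s ≤ (k : ℤ) ^ 2


noncomputable def Mmat (n : ℕ) : Matrix (Fin n) (Fin n) ℤ :=
  Matrix.of fun i j => if i < j then 1 else if j < i then -1 else 0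

lemma Mmat_apply (n : ℕ) (i j : Fin n) :
    Mmat n i j = if i.val < j.val then 1 else if j.val < i.val then -1 else 0 := by
  simp only [Mmat, Matrix.of_apply, Fin.lt_def]

lemma det_Mmat_step (m : ℕ) : (Mmat (2 + m)).det = (Mmat m).det := by
  classical
  have h1 : (Mmat (2+m)).det = ((Mmat (2+m)).submatrix finSumFinEquiv finSumFinEquiv).det :=
    (Matrix.det_submatrix_equiv_self _ _).symm
  have hAA' : (!![0,1;-1,0] : Matrix (Fin 2) (Fin 2) ℤ) * !![0,-1;1,0] = 1 := by
    ext i j; fin_cases i <;> fin_cases j <;>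
      simp [Matrix.mul_apply, Fin.sum_univ_two, Matrix.one_apply]
  have hA'A : (!![0,-1;1,0] : Matrix (Fin 2) (Fin 2) ℤ) * !![0,1;-1,0] = 1 := by
    ext i j; fin_cases i <;> fin_cases j <;>
      simp [Matrix.mul_apply, Fin.sum_univ_two, Matrix.one_apply]
  letI : Invertible (!![0,1;-1,0] : Matrix (Fin 2) (Fin 2) ℤ) := ⟨!![0,-1;1,0], hA'A, hAA'⟩
  have hsub : (Mmat (2+m)).submatrix finSumFinEquiv finSumFinEquiv
      = Matrix.fromBlocks !![0,1;-1,0] (Matrix.of fun _ _ => (1:ℤ))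
          (Matrix.of fun _ _ => (-1:ℤ)) (Mmat m) := by
    ext x y
    cases x with
    | inl i =>
      cases y with
      | inl j =>
        simp only [Matrix.submatrix_apply, finSumFinEquiv_apply_left,
          Matrix.fromBlocks_apply₁₁, Mmat_apply]
        fin_cases i <;> fin_cases j <;> simp
      | inr j =>
        simp only [Matrix.submatrix_apply, finSumFinEquiv_apply_left,
          finSumFinEquiv_apply_right, Matrix.fromBlocks_apply₁₂, Mmat_apply,
          Fin.coe_castAdd, Fin.coe_natAdd, Matrix.of_apply]
        rw [if_pos (by omega)]
    | inr i =>
      cases y with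
      | inl j =>
        simp only [Matrix.submatrix_apply, finSumFinEquiv_apply_left,
          finSumFinEquiv_apply_right, Matrix.fromBlocks_apply₂₁, Mmat_apply,
          Fin.coe_castAdd, Fin.coe_natAdd, Matrix.of_apply]
        rw [if_neg (by omega), if_pos (by omega)]
      | inr j =>
        simp only [Matrix.submatrix_apply, finSumFinEquiv_apply_right,
          Matrix.fromBlocks_apply₂₂, Mmat_apply, Fin.coe_natAdd,
          Nat.add_lt_add_iff_left]
  have hCB : (Matrix.of fun _ _ => (-1:ℤ) : Matrix (Fin m) (Fin 2) ℤ) * !![0,-1;1,0]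
      * (Matrix.of fun _ _ => (1:ℤ) : Matrix (Fin 2) (Fin m) ℤ) = 0 := by
    ext i j
    simp [Matrix.mul_apply, Fin.sum_univ_two]
  have hinv : (⅟(!![0,1;-1,0] : Matrix (Fin 2) (Fin 2) ℤ)) = !![0,-1;1,0] := rfl
  rw [h1, hsub, Matrix.det_fromBlocks₁₁, hinv, hCB, sub_zero]
  have hdA : (!![0,1;-1,0] : Matrix (Fin 2) (Fin 2) ℤ).det = 1 := by
    simp [Matrix.det_fin_two]
  rw [hdA, one_mul]

lemma det_Mmat_even (k : ℕ) : (Mmat (2*k)).det = 1 := by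
  induction k with
  | zero => simp [Matrix.det_isEmpty]
  | succ k ih =>
    rw [show 2*(k+1) = 2 + 2*k by ring, det_Mmat_step]
    exact ih

theorem stmt1' {V : Type*} [Fintype V] [DecidableEq V] (r : V → V → Prop)
    (hT : (∀ i, ¬ r i i) ∧ ∀ i j, i ≠ j → (r i j ↔ ¬ r j i))
    (htr : ∀ a b c, r a b → r b c → r a c) (hn : Even (Fintype.card V)) :
    (Matrix.of fun i j => if r i j then (1:ℤ) else if r j i then -1 else 0 : Matrix V V ℤ).det = 1 := by
  classical
  obtain ⟨hirr, hiff⟩ := hT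
  haveI : IsIrrefl V r := ⟨hirr⟩
  haveI : IsTrans V r := ⟨htr⟩
  haveI : IsTrichotomous V r := ⟨fun a b => by
    by_cases h : a = b
    · exact fun _ _ => h
    · by_cases hab : r a b
      · exact fun h' _ => absurd hab h'
      · exact fun _ h' => absurd (not_not.mp ((hiff a b h).not.mp hab)) h'⟩
  haveI : IsStrictOrder V r := ⟨⟩
  haveI : IsStrictTotalOrder V r := ⟨⟩
  letI : DecidableRel r := Classical.decRel r
  letI : LinearOrder V := linearOrderOfSTO r
  have hlt : ∀ a b : V, a < b ↔ r a b := fun a b => Iff.rfl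
  let e := monoEquivOfFin V (rfl : Fintype.card V = Fintype.card V)
  have hsub : (Matrix.of fun i j => if r i j then (1:ℤ) else if r j i then -1 else 0 :
      Matrix V V ℤ).submatrix e e = Mmat (Fintype.card V) := by
    ext i j
    have h1 : r (e i) (e j) ↔ (i:ℕ) < j := by
      rw [← hlt, e.lt_iff_lt, Fin.lt_def]
    have h2 : r (e j) (e i) ↔ (j:ℕ) < i := by
      rw [← hlt, e.lt_iff_lt, Fin.lt_def]
    simp only [Matrix.submatrix_apply, Matrix.of_apply, Mmat_apply]
    by_cases hij : (i:ℕ) < j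
    · simp [h1.mpr hij, hij, Nat.lt_asymm hij]
    · by_cases hji : (j:ℕ) < i
      · simp [h1, h2.mpr hji, hij, hji]
      · simp [h1, h2, hij, hji]
  obtain ⟨k, hk⟩ := hn
  calc (Matrix.of fun i j => if r i j then (1:ℤ) else if r j i then -1 else 0 :
        Matrix V V ℤ).det
      = ((Matrix.of fun i j => if r i j then (1:ℤ) else if r j i then -1 else 0 :
        Matrix V V ℤ).submatrix e e).det := (Matrix.det_submatrix_equiv_self e.toEquiv _).symm
    _ = (Mmat (Fintype.card V)).det := by rw [hsub]
    _ = 1 := by rw [hk, show k + k = 2*k by ring]; exact det_Mmat_even k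

theorem stmt1 {V : Type*} [Fintype V] [DecidableEq V] (r : V → V → Prop)
    (hT : IsTournament r) (htr : IsTransitive r) (hn : Even (Fintype.card V)) :
    tdet r = 1 := stmt1' r hT htr hn
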